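/- If n is odd with n ≥ 3 and m is even, then there exists a profile u with |G_C(u)| = m − 2; that is, some (equivalently, by neutrality, every) set of cardinality m − 2 is in the range of the Copeland correspondence. -/

import Mathlib

open Finset

/-- `x` defeats `y` by simple majority at `u`:
`|{i : x ≻_{u(i)} y}| > |{i : y ≻_{u(i)} x}|`.  A profile assigns to each
individual `i` a rank equivalence `u i : Fin m ≃ Fin m` (lower rank = better),
so `i` prefers `x` to `y` iff `(u i) x < (u i) y`. -/
def defeats {m n : ℕ} (u : Fin n → (Fin m ≃ Fin m)) (x y : Fin m) : Prop :=
  (univ.filter (fun i : Fin n => (u i) y < (u i) x)).card <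
    (univ.filter (fun i : Fin n => (u i) x < (u i) y)).card

instance {m n : ℕ} (u : Fin n → (Fin m ≃ Fin m)) : DecidableRel (defeats u) :=
  fun _ _ => by unfold defeats; infer_instance

/-- The Copeland score of `x` at `u`: the number of alternatives `x` defeats
by simple majority. -/
def copelandScore {m n : ℕ} (u : Fin n → (Fin m ≃ Fin m)) (x : Fin m) : ℕ :=
  (univ.filter (fun y : Fin m => defeats u x y)).card

/-- The Copeland correspondence `G_C(u)`: alternatives with maximal Copeland
score. -/
def copelandSet {m n : ℕ} (u : Fin n → (Fin m ≃ Fin m)) : Finset (Fin m) :=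
  univ.filter (fun x => ∀ z : Fin m, copelandScore u z ≤ copelandScore u x)

namespace CopelandAux

/-- rank function of voter 2 -/
def r2 (k v : ℕ) : ℕ :=
  if v = 2*k-2 then 0 else if v = k-1 then 1 else if v = 2*k-1 then 2
  else if v = k-2 then 3 else if k ≤ v then 4*k-2-2*v else 2*k-1-2*v

def s2 (k r : ℕ) : ℕ :=
  if r = 0 then 2*k-2 else if r = 1 then k-1 else if r = 2 then 2*k-1
  else if r = 3 then k-2 else if r % 2 = 0 then 2*k-1-r/2 else (2*k-1-r)/2

/-- rank function of voter 3 -/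
def r3 (k v : ℕ) : ℕ :=
  if v = 2*k-1 then k-2 else if v = k-1 then 2*k-2 else if v = 2*k-2 then 2*k-1
  else if k ≤ v then v-k else v+k-1

def s3 (k r : ℕ) : ℕ :=
  if r = k-2 then 2*k-1 else if r = 2*k-2 then k-1 else if r = 2*k-1 then 2*k-2
  else if r ≤ k-3 then r+k else r-(k-1)

lemma r2_lt (k : ℕ) (hk : 2 ≤ k) (v : ℕ) (hv : v < 2*k) : r2 k v < 2*k := by
  unfold r2; split_ifs <;> omega

lemma r3_lt (k : ℕ) (hk : 2 ≤ k) (v : ℕ) (hv : v < 2*k) : r3 k v < 2*k := by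
  unfold r3; split_ifs <;> omega

lemma s2_lt (k : ℕ) (hk : 2 ≤ k) (v : ℕ) (hv : v < 2*k) : s2 k v < 2*k := by
  unfold s2; split_ifs <;> omega

lemma s3_lt (k : ℕ) (hk : 2 ≤ k) (v : ℕ) (hv : v < 2*k) : s3 k v < 2*k := by
  unfold s3; split_ifs <;> omega

lemma s2_r2 (k : ℕ) (hk : 2 ≤ k) (v : ℕ) (hv : v < 2*k) : s2 k (r2 k v) = v := by
  unfold r2; split_ifs with h1 h2 h3 h4 h5 <;> unfold s2 <;> split_ifs <;> first | omega | contradiction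

lemma r2_s2 (k : ℕ) (hk : 2 ≤ k) (r : ℕ) (hr : r < 2*k) : r2 k (s2 k r) = r := by
  unfold s2; split_ifs with h1 h2 h3 h4 h5 <;> unfold r2 <;> split_ifs <;> first | omega | contradiction

lemma s3_r3 (k : ℕ) (hk : 2 ≤ k) (v : ℕ) (hv : v < 2*k) : s3 k (r3 k v) = v := by
  unfold r3; split_ifs with h1 h2 h3 h4 <;> unfold s3 <;> split_ifs <;> first | omega | contradiction

lemma r3_s3 (k : ℕ) (hk : 2 ≤ k) (r : ℕ) (hr : r < 2*k) : r3 k (s3 k r) = r := by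
  unfold s3; split_ifs with h1 h2 h3 h4 <;> unfold r3 <;> split_ifs <;> first | omega | contradiction


def e2 (k : ℕ) (hk : 2 ≤ k) : Fin (2*k) ≃ Fin (2*k) where
  toFun v := ⟨r2 k v.val, r2_lt k hk v.val v.isLt⟩
  invFun r := ⟨s2 k r.val, s2_lt k hk r.val r.isLt⟩
  left_inv v := by ext; exact s2_r2 k hk v.val v.isLt
  right_inv r := by ext; exact r2_s2 k hk r.val r.isLt

def e3 (k : ℕ) (hk : 2 ≤ k) : Fin (2*k) ≃ Fin (2*k) where
  toFun v := ⟨r3 k v.val, r3_lt k hk v.val v.isLt⟩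
  invFun r := ⟨s3 k r.val, s3_lt k hk r.val r.isLt⟩
  left_inv v := by ext; exact s3_r3 k hk v.val v.isLt
  right_inv r := by ext; exact r3_s3 k hk r.val r.isLt

/-- voter `j`'s ranking (as a function of `j : ℕ`) -/
def profF (k : ℕ) (hk : 2 ≤ k) (j : ℕ) : Fin (2*k) ≃ Fin (2*k) :=
  if j = 0 then Equiv.refl _
  else if j = 1 then e2 k hk
  else if j = 2 then e3 k hk
  else if j % 2 = 1 then Equiv.refl _
  else Fin.revPerm

def prof (k n : ℕ) (hk : 2 ≤ k) : Fin n → (Fin (2*k) ≃ Fin (2*k)) :=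
  fun i => profF k hk i.val

/-- the target tournament -/
def Beats (k a b : ℕ) : Prop :=
  (a ≤ k-2 ∧ ((a < b ∧ b ≤ a+k-1) ∨ b = 2*k-2)) ∨
  (k-1 ≤ a ∧ a ≤ 2*k-3 ∧ ((a < b ∧ b ≤ 2*k-3) ∨ b + k ≤ a ∨ b = 2*k-2 ∨ b = 2*k-1)) ∨
  (a = 2*k-2 ∧ b = 2*k-1) ∨
  (a = 2*k-1 ∧ b ≤ k-2)

instance (k a b : ℕ) : Decidable (Beats k a b) := by unfold Beats; infer_instance

def TwoOf (P Q R : Prop) : Prop := (P ∧ Q) ∨ (P ∧ R) ∨ (Q ∧ R)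

set_option maxHeartbeats 4000000 in
lemma twoOf_beats (k : ℕ) (hk : 2 ≤ k) (a b : Fin (2*k)) :
    TwoOf (a < b) (e2 k hk a < e2 k hk b) (e3 k hk a < e3 k hk b) ↔ Beats k a.val b.val := by
  have ha := a.isLt
  have hb := b.isLt
  simp only [TwoOf, Beats, e2, e3, Equiv.coe_fn_mk, Fin.lt_def, Fin.mk_lt_mk]
  unfold r2 r3
  split_ifs <;> omega


lemma filter_fin_card {m : ℕ} (p : ℕ → Prop) [DecidablePred p] :
    ((univ : Finset (Fin m)).filter (fun v => p v.val)).card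
      = ((range m).filter p).card := by
  rw [← Finset.card_image_of_injective (univ.filter (fun v : Fin m => p v.val)) Fin.val_injective]
  congr 1
  ext j
  simp only [Finset.mem_image, Finset.mem_filter, Finset.mem_univ, true_and, Finset.mem_range]
  constructor
  · rintro ⟨v, hv, rfl⟩; exact ⟨v.isLt, hv⟩
  · rintro ⟨hj, hp⟩; exact ⟨⟨j, hj⟩, hp, rfl⟩

lemma odd_even_card (n : ℕ) (hno : Odd n) :
    ((Ico 3 n).filter (fun j => j % 2 = 1)).card
      = ((Ico 3 n).filter (fun j => j % 2 = 0)).card := by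
  obtain ⟨c, hc⟩ := hno
  apply Finset.card_bij' (i := fun j _ => j + 1) (j := fun j _ => j - 1) <;>
  · intro a ha
    simp only [Finset.mem_filter, Finset.mem_Ico] at ha ⊢
    omega


lemma ico_pref_lt (k n : ℕ) (hk : 2 ≤ k) {a b : Fin (2*k)} (hab : a < b) :
    ((Ico 3 n).filter (fun j => profF k hk j a < profF k hk j b))
      = (Ico 3 n).filter (fun j => j % 2 = 1) := by
  apply Finset.filter_congr
  intro j hj
  simp only [mem_Ico] at hj
  simp only [profF, if_neg (by omega : ¬ j = 0), if_neg (by omega : ¬ j = 1),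
    if_neg (by omega : ¬ j = 2)]
  by_cases hp : j % 2 = 1
  · simp only [if_pos hp, Equiv.refl_apply]
    exact iff_of_true hab hp
  · simp only [if_neg hp, Fin.revPerm_apply, Fin.rev_lt_rev]
    exact iff_of_false (fun h => absurd h (asymm hab)) hp

lemma ico_pref_gt (k n : ℕ) (hk : 2 ≤ k) {a b : Fin (2*k)} (hab : a < b) :
    ((Ico 3 n).filter (fun j => profF k hk j b < profF k hk j a))
      = (Ico 3 n).filter (fun j => j % 2 = 0) := by
  apply Finset.filter_congr
  intro j hj
  simp only [mem_Ico] at hj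
  simp only [profF, if_neg (by omega : ¬ j = 0), if_neg (by omega : ¬ j = 1),
    if_neg (by omega : ¬ j = 2)]
  by_cases hp : j % 2 = 1
  · simp only [if_pos hp, Equiv.refl_apply]
    exact iff_of_false (fun h => absurd h (asymm hab)) (by omega)
  · simp only [if_neg hp, Fin.revPerm_apply, Fin.rev_lt_rev]
    exact iff_of_true hab (by omega)

lemma card3 (p : ℕ → Prop) [DecidablePred p] :
    ((range 3).filter p).card
      = (if p 0 then 1 else 0) + ((if p 1 then 1 else 0) + (if p 2 then 1 else 0)) := by
  rw [Finset.card_filter, Finset.sum_range_succ, Finset.sum_range_succ,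
    Finset.sum_range_succ, Finset.sum_range_zero, Nat.zero_add, Nat.add_assoc]

lemma defeats_iff (k n : ℕ) (hk : 2 ≤ k) (hn : 3 ≤ n) (hno : Odd n)
    (a b : Fin (2*k)) (hab : a ≠ b) :
    defeats (prof k n hk) a b
      ↔ TwoOf (a < b) (e2 k hk a < e2 k hk b) (e3 k hk a < e3 k hk b) := by
  have hsplit : (range n) = (range 3) ∪ Ico 3 n := by
    rw [range_eq_Ico]
    exact (Finset.Ico_union_Ico_eq_Ico (by omega) hn).symm
  have hdisj : Disjoint (range 3) (Ico 3 n) := by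
    rw [Finset.disjoint_left]
    intro x hx hx'
    simp only [mem_range] at hx
    simp only [mem_Ico] at hx'
    omega
  simp only [defeats, prof]
  erw [filter_fin_card (fun j => profF k hk j b < profF k hk j a),
      filter_fin_card (fun j => profF k hk j a < profF k hk j b)]
  rw [hsplit,
      filter_union, filter_union,
      card_union_of_disjoint (disjoint_filter_filter hdisj),
      card_union_of_disjoint (disjoint_filter_filter hdisj)]
  have h0 : profF k hk 0 = Equiv.refl _ := by simp [profF]
  have h1 : profF k hk 1 = e2 k hk := by simp [profF]
  have h2 : profF k hk 2 = e3 k hk := by simp [profF]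
  have he2 : e2 k hk a ≠ e2 k hk b := fun h => hab ((e2 k hk).injective h)
  have he3 : e3 k hk a ≠ e3 k hk b := fun h => hab ((e3 k hk).injective h)
  rcases lt_or_gt_of_ne hab with h | h
  · rw [ico_pref_lt k n hk h, ico_pref_gt k n hk h, odd_even_card n hno,
      card3 _, card3 _, h0, h1, h2]
    simp only [Equiv.refl_apply, Nat.add_lt_add_iff_right, TwoOf]
    rcases lt_or_gt_of_ne he2 with h2' | h2' <;>
      rcases lt_or_gt_of_ne he3 with h3' | h3' <;>
      simp [h, h2', h3', asymm h, asymm h2', asymm h3', not_lt_of_gt]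
  · rw [ico_pref_lt k n hk h, ico_pref_gt k n hk h, odd_even_card n hno,
      card3 _, card3 _, h0, h1, h2]
    simp only [Equiv.refl_apply, Nat.add_lt_add_iff_right, TwoOf]
    rcases lt_or_gt_of_ne he2 with h2' | h2' <;>
      rcases lt_or_gt_of_ne he3 with h3' | h3' <;>
      simp [h, h2', h3', asymm h, asymm h2', asymm h3', not_lt_of_gt]


lemma defeats_beats (k n : ℕ) (hk : 2 ≤ k) (hn : 3 ≤ n) (hno : Odd n) (a b : Fin (2*k)) :
    defeats (prof k n hk) a b ↔ Beats k a.val b.val := by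
  by_cases hab : a = b
  · subst hab
    simp only [defeats, lt_self_iff_false, false_iff]
    have := a.isLt
    simp only [Beats]
    omega
  · rw [defeats_iff k n hk hn hno a b hab, twoOf_beats k hk a b]

lemma score_eq (k n : ℕ) (hk : 2 ≤ k) (hn : 3 ≤ n) (hno : Odd n) (a : Fin (2*k)) :
    copelandScore (prof k n hk) a = ((range (2*k)).filter (Beats k a.val)).card := by
  simp only [copelandScore]
  rw [← filter_fin_card (fun j => Beats k a.val j)]
  congr 1
  apply Finset.filter_congr
  intro b _
  exact defeats_beats k n hk hn hno a b

lemma beats_card_low (k : ℕ) (hk : 2 ≤ k) (t : ℕ) (ht : t ≤ k-2) :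
    ((range (2*k)).filter (Beats k t)).card = k := by
  have hs : (range (2*k)).filter (Beats k t) = Ioc t (t+k-1) ∪ {2*k-2} := by
    ext x
    simp only [mem_filter, mem_range, mem_union, mem_Ioc, mem_singleton, Beats, true_and, and_true]
    omega
  have hd : Disjoint (Ioc t (t+k-1)) ({2*k-2} : Finset ℕ) := by
    rw [Finset.disjoint_left]
    intro x hx hx'
    simp only [mem_Ioc] at hx
    simp only [mem_singleton] at hx'
    omega
  rw [hs, card_union_of_disjoint hd, Nat.card_Ioc, card_singleton]
  omega

lemma beats_card_mid (k : ℕ) (hk : 2 ≤ k) (t : ℕ) (h1 : k-1 ≤ t) (h2 : t ≤ 2*k-3) :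
    ((range (2*k)).filter (Beats k t)).card = k := by
  have hs : (range (2*k)).filter (Beats k t)
      = (range (t+1-k) ∪ Ioc t (2*k-3)) ∪ {2*k-2, 2*k-1} := by
    ext x
    simp only [mem_filter, mem_range, mem_union, mem_Ioc, mem_insert,
      mem_singleton, Beats, true_and, and_true]
    omega
  have hd1 : Disjoint (range (t+1-k)) (Ioc t (2*k-3)) := by
    rw [Finset.disjoint_left]
    intro x hx hx'
    simp only [mem_range] at hx
    simp only [mem_Ioc] at hx'
    omega
  have hd2 : Disjoint (range (t+1-k) ∪ Ioc t (2*k-3)) ({2*k-2, 2*k-1} : Finset ℕ) := by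
    rw [Finset.disjoint_left]
    intro x hx hx'
    simp only [mem_union, mem_range, mem_Ioc] at hx
    simp only [mem_insert, mem_singleton] at hx'
    omega
  have hc2 : ({2*k-2, 2*k-1} : Finset ℕ).card = 2 := by
    rw [card_insert_of_notMem (by simp; omega), card_singleton]
  rw [hs, card_union_of_disjoint hd2, card_union_of_disjoint hd1, Nat.card_Ioc,
    card_range, hc2]
  omega

lemma beats_card_x (k : ℕ) (hk : 2 ≤ k) :
    ((range (2*k)).filter (Beats k (2*k-2))).card = 1 := by
  have hs : (range (2*k)).filter (Beats k (2*k-2)) = {2*k-1} := by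
    ext x
    simp only [mem_filter, mem_range, mem_singleton, Beats, true_and, and_true]
    omega
  rw [hs, card_singleton]

lemma beats_card_y (k : ℕ) (hk : 2 ≤ k) :
    ((range (2*k)).filter (Beats k (2*k-1))).card = k - 1 := by
  have hs : (range (2*k)).filter (Beats k (2*k-1)) = range (k-1) := by
    ext x
    simp only [mem_filter, mem_range, Beats, true_and, and_true]
    omega
  rw [hs, card_range]

lemma score_val (k n : ℕ) (hk : 2 ≤ k) (hn : 3 ≤ n) (hno : Odd n) (a : Fin (2*k)) :
    copelandScore (prof k n hk) a
      = (if a.val ≤ 2*k-3 then k else if a.val = 2*k-2 then 1 else k-1) := by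
  rw [score_eq k n hk hn hno a]
  have ha := a.isLt
  by_cases h1 : a.val ≤ 2*k-3
  · rw [if_pos h1]
    by_cases h2 : a.val ≤ k-2
    · exact beats_card_low k hk a.val h2
    · exact beats_card_mid k hk a.val (by omega) h1
  · rw [if_neg h1]
    by_cases h2 : a.val = 2*k-2
    · rw [if_pos h2, h2]
      exact beats_card_x k hk
    · rw [if_neg h2, show a.val = 2*k-1 by omega]
      exact beats_card_y k hk

lemma copelandSet_card (k n : ℕ) (hk : 2 ≤ k) (hn : 3 ≤ n) (hno : Odd n) :
    (copelandSet (prof k n hk)).card = 2*k - 2 := by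
  have hmax : ∀ a : Fin (2*k),
      (∀ z : Fin (2*k), copelandScore (prof k n hk) z ≤ copelandScore (prof k n hk) a)
        ↔ a.val ≤ 2*k-3 := by
    intro a
    constructor
    · intro h
      have h0 := h ⟨0, by omega⟩
      rw [score_val k n hk hn hno, score_val k n hk hn hno] at h0
      simp only [show ((⟨0, by omega⟩ : Fin (2*k)) : ℕ) = 0 from rfl] at h0
      rw [if_pos (by omega : (0:ℕ) ≤ 2*k-3)] at h0
      by_contra hc
      rw [if_neg hc] at h0
      split_ifs at h0 <;> omega
    · intro h z
      rw [score_val k n hk hn hno, score_val k n hk hn hno, if_pos h]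
      split_ifs <;> omega
  have hset : copelandSet (prof k n hk) = univ.filter (fun a : Fin (2*k) => a.val ≤ 2*k-3) := by
    simp only [copelandSet]
    apply Finset.filter_congr
    intro a _
    exact hmax a
  rw [hset, filter_fin_card (fun j => j ≤ 2*k-3)]
  have : (range (2*k)).filter (fun j => j ≤ 2*k-3) = range (2*k-2) := by
    ext x
    simp only [mem_filter, mem_range]
    omega
  rw [this, card_range]

end CopelandAux

/-- If `n` is odd with `n ≥ 3` and `m` is even, there is a profile whose
Copeland choice set has cardinality `m − 2`. -/
theorem copeland_m_sub_two (m n : ℕ) (hm : 3 ≤ m) (hno : Odd n)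
    (hn : 3 ≤ n) (hme : Even m) :
    ∃ u : Fin n → (Fin m ≃ Fin m), (copelandSet u).card = m - 2 := by
  obtain ⟨k, rfl⟩ := hme
  rw [show k + k = 2*k from (two_mul k).symm]
  have hk : 2 ≤ k := by omega
  exact ⟨CopelandAux.prof k n hk, CopelandAux.copelandSet_card k n hk hn hno⟩
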